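/- Let k ≥ 0, and let S be an invertible bounded operator on a complex Hilbert space such that ‖S X S⁻¹ + S⁻¹ X S + kX‖ ≥ (k+2)‖X‖ for all bounded operators X. If moreover S is self-adjoint, then for all λ, μ in the spectrum of S one has |λ/μ + μ/λ + k| ≥ k + 2. -/

import Mathlib

open ContinuousLinearMap



lemma bump_aux1 (a ε : ℝ) (hε : 0 < ε) (t : ℝ) :
    |t * max 0 (1 - |t - a|/ε) - a * max 0 (1 - |t - a|/ε)| ≤ ε := by
  set s := max 0 (1 - |t - a|/ε) with hs_def
  have hs0 : 0 ≤ s := le_max_left _ _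
  have hs1 : s ≤ 1 := max_le (by linarith) (by
    have : 0 ≤ |t - a|/ε := by positivity
    linarith)
  have key : |t * s - a * s| = |t - a| * s := by
    rw [← sub_mul, abs_mul, abs_of_nonneg hs0]
  rw [key]
  rcases le_or_gt ε |t - a| with hc | hc
  · have : s = 0 := max_eq_left (by
      rw [sub_nonpos]
      exact (one_le_div hε).mpr hc)
    rw [this, mul_zero]; exact hε.le
  · calc |t - a| * s ≤ ε * 1 := mul_le_mul hc.le hs1 hs0 hε.le
      _ = ε := mul_one ε

lemma bump_aux2 (a ε : ℝ) (hε : 0 < ε) (hεa : ε ≤ |a|/2) (t : ℝ) :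
    |t⁻¹ * max 0 (1 - |t - a|/ε) - a⁻¹ * max 0 (1 - |t - a|/ε)| ≤ 2*ε/a^2 := by
  have ha0 : a ≠ 0 := by
    intro hz
    rw [hz] at hεa; simp at hεa; linarith
  have ha' : 0 < |a| := abs_pos.mpr ha0
  set s := max 0 (1 - |t - a|/ε) with hs_def
  have hs0 : 0 ≤ s := le_max_left _ _
  have hs1 : s ≤ 1 := max_le (by linarith) (by
    have : 0 ≤ |t - a|/ε := by positivity
    linarith)
  rcases le_or_gt ε |t - a| with hc | hc
  · have : s = 0 := max_eq_left (by
      rw [sub_nonpos]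
      exact (one_le_div hε).mpr hc)
    rw [this, mul_zero, mul_zero, sub_zero, abs_zero]
    positivity
  · have hta : |a|/2 ≤ |t| := by
      have h1 := abs_sub_abs_le_abs_sub a t
      rw [abs_sub_comm] at h1
      linarith
    have ht0 : t ≠ 0 := by
      intro hz; rw [hz] at hta; simp at hta; linarith
    have key : |t⁻¹ * s - a⁻¹ * s| = |t⁻¹ - a⁻¹| * s := by
      rw [← sub_mul, abs_mul, abs_of_nonneg hs0]
    rw [key]
    have h2 : t⁻¹ - a⁻¹ = (a - t) / (t * a) := inv_sub_inv ht0 ha0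
    have h3 : |t⁻¹ - a⁻¹| ≤ 2*ε/a^2 := by
      rw [h2, abs_div, abs_mul]
      have hnum : |a - t| ≤ ε := by rw [abs_sub_comm]; exact hc.le
      have hden : |a|/2 * |a| ≤ |t| * |a| := by
        apply mul_le_mul_of_nonneg_right hta ha'.le
      have hden0 : 0 < |a|/2 * |a| := by positivity
      calc |a - t| / (|t| * |a|) ≤ ε / (|a|/2 * |a|) := by
            apply div_le_div₀ hε.le hnum hden0 hden
        _ = 2*ε/a^2 := by
            rw [div_mul_eq_mul_div, abs_mul_abs_self]
            rw [div_div_eq_mul_div]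
            ring
    calc |t⁻¹ - a⁻¹| * s ≤ (2*ε/a^2) * 1 := by
          apply mul_le_mul h3 hs1 hs0 (by positivity)
      _ = 2*ε/a^2 := mul_one _


open Filter Topology in
lemma stmt11_limit (k c C ε₀ : ℝ) (hε₀ : 0 < ε₀)
    (key : ∀ ε : ℝ, ε ∈ Set.Ioc 0 ε₀ → (k+2)*(1-ε)^3 ≤ c + C*ε) :
    k + 2 ≤ c := by
  have c1 : Continuous (fun ε : ℝ => (k+2)*(1-ε)^3) := by fun_prop
  have c2 : Continuous (fun ε : ℝ => c + C*ε) := by fun_prop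
  have h1 : Tendsto (fun ε : ℝ => (k+2)*(1-ε)^3) (𝓝[>] 0) (𝓝 (k+2)) := by
    simpa using (c1.tendsto 0).mono_left nhdsWithin_le_nhds
  have h2 : Tendsto (fun ε : ℝ => c + C*ε) (𝓝[>] 0) (𝓝 c) := by
    simpa using (c2.tendsto 0).mono_left nhdsWithin_le_nhds
  refine le_of_tendsto_of_tendsto h1 h2 ?_
  filter_upwards [Ioc_mem_nhdsGT_of_mem (Set.mem_Ico.mpr ⟨le_refl 0, hε₀⟩)] with ε hε
  exact key ε hε
variable {H : Type*} [NormedAddCommGroup H] [InnerProductSpace ℂ H] [CompleteSpace H]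

set_option maxHeartbeats 1600000 in
set_option synthInstance.maxHeartbeats 400000 in
lemma stmt11_core (k : ℝ) (hk : 0 ≤ k) (S : (H →L[ℂ] H)ˣ)
    (hS : IsSelfAdjoint (S : H →L[ℂ] H))
    (h : ∀ X : H →L[ℂ] H,
      (k + 2) * ‖X‖ ≤ ‖(S : H →L[ℂ] H) * X * (↑S⁻¹ : H →L[ℂ] H) +
        (↑S⁻¹ : H →L[ℂ] H) * X * (S : H →L[ℂ] H) + k • X‖)
    (a b : ℝ) (haS : a ∈ spectrum ℝ (S : H →L[ℂ] H)) (hbS : b ∈ spectrum ℝ (S : H →L[ℂ] H))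
    (h0 : (0:ℝ) ∉ spectrum ℝ (S : H →L[ℂ] H))
    (ha0 : a ≠ 0) (hb0 : b ≠ 0)
    (ε : ℝ) (hε : 0 < ε) (hεa : ε ≤ |a|/2) (hεb : ε ≤ |b|/2) (hε1 : ε ≤ 1/2) :
    (k+2)*(1-ε)^3 ≤ |a * b⁻¹ + a⁻¹ * b + k| +
      (‖(↑S⁻¹ : H →L[ℂ] H)‖ + |a| * (2/b^2) + (2/a^2) * ‖(S : H →L[ℂ] H)‖ + |a|⁻¹) * ε := by
  set Sop := (S : H →L[ℂ] H) with hSop_def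
  set Si := (↑S⁻¹ : H →L[ℂ] H) with hSi_def
  set f : ℝ → ℝ := fun t => max 0 (1 - |t - a|/ε) with hf_def
  set g : ℝ → ℝ := fun t => max 0 (1 - |t - b|/ε) with hg_def
  have hfc : Continuous f := by
    apply continuous_const.max
    fun_prop
  have hgc : Continuous g := by
    apply continuous_const.max
    fun_prop
  have hf0 : ∀ t, 0 ≤ f t := fun t => le_max_left _ _
  have hg0 : ∀ t, 0 ≤ g t := fun t => le_max_left _ _
  have hf1 : ∀ t, f t ≤ 1 := fun t => max_le zero_le_one (by
    have : 0 ≤ |t - a|/ε := by positivity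
    linarith)
  have hg1 : ∀ t, g t ≤ 1 := fun t => max_le zero_le_one (by
    have : 0 ≤ |t - b|/ε := by positivity
    linarith)
  have hfa : f a = 1 := by simp [hf_def]
  have hgb : g b = 1 := by simp [hg_def]
  have hinv_cont : ContinuousOn (fun t : ℝ => t⁻¹) (spectrum ℝ Sop) :=
    ContinuousOn.inv₀ continuousOn_id (fun t ht hz => h0 (hz ▸ ht))
  set F := cfc f Sop with hF_def
  set G := cfc g Sop with hG_def
  -- norms of F, G
  have hFn : ‖F‖ ≤ 1 := norm_cfc_le zero_le_one (fun t _ => by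
    rw [Real.norm_eq_abs, abs_of_nonneg (hf0 t)]; exact hf1 t)
  have hGn : ‖G‖ ≤ 1 := norm_cfc_le zero_le_one (fun t _ => by
    rw [Real.norm_eq_abs, abs_of_nonneg (hg0 t)]; exact hg1 t)
  have hFge : (1:ℝ) ≤ ‖F‖ := by
    have := norm_apply_le_norm_cfc f Sop haS hfc.continuousOn hS
    rwa [hfa, norm_one] at this
  have hGge : (1:ℝ) ≤ ‖G‖ := by
    have := norm_apply_le_norm_cfc g Sop hbS hgc.continuousOn hS
    rwa [hgb, norm_one] at this
  -- cfc product identities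
  have hmulF : cfc (fun t : ℝ => t * f t) Sop = Sop * F := by
    conv_rhs => rw [← cfc_id' ℝ Sop hS]
    exact cfc_mul (fun x : ℝ => x) f Sop continuousOn_id hfc.continuousOn
  have hsmulF : ∀ r : ℝ, cfc (fun t : ℝ => r * f t) Sop = r • F := fun r => by
    rw [hF_def]; exact cfc_const_mul r f Sop hfc.continuousOn
  have hinvF : cfc (fun t : ℝ => t⁻¹ * f t) Sop = Si * F := by
    rw [hSi_def]
    conv_rhs => rw [← cfc_inv_id (R := ℝ) S hS]
    exact cfc_mul (fun x : ℝ => x⁻¹) f Sop hinv_cont hfc.continuousOn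
  have hmulG : cfc (fun t : ℝ => g t * t) Sop = G * Sop := by
    conv_rhs => rw [← cfc_id' ℝ Sop hS]
    exact cfc_mul g (fun x : ℝ => x) Sop hgc.continuousOn continuousOn_id
  have hsmulG : ∀ r : ℝ, cfc (fun t : ℝ => r * g t) Sop = r • G := fun r => by
    rw [hG_def]; exact cfc_const_mul r g Sop hgc.continuousOn
  have hinvG : cfc (fun t : ℝ => g t * t⁻¹) Sop = G * Si := by
    rw [hSi_def]
    conv_rhs => rw [← cfc_inv_id (R := ℝ) S hS]
    exact cfc_mul g (fun x : ℝ => x⁻¹) Sop hgc.continuousOn hinv_cont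
  -- norm bounds of the error pieces
  have hn1 : ‖Sop * F - a • F‖ ≤ ε := by
    rw [← hmulF, ← hsmulF a,
      ← cfc_sub (fun t : ℝ => t * f t) (fun t : ℝ => a * f t) Sop
        ((continuous_id.mul hfc).continuousOn) ((continuous_const.mul hfc).continuousOn)]
    exact norm_cfc_le hε.le (fun t _ => by
      rw [Real.norm_eq_abs]; exact bump_aux1 a ε hε t)
  have hn2 : ‖Si * F - a⁻¹ • F‖ ≤ 2*ε/a^2 := by
    rw [← hinvF, ← hsmulF a⁻¹,
      ← cfc_sub (fun t : ℝ => t⁻¹ * f t) (fun t : ℝ => a⁻¹ * f t) Sop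
        (hinv_cont.mul hfc.continuousOn) ((continuous_const.mul hfc).continuousOn)]
    exact norm_cfc_le (by positivity) (fun t _ => by
      rw [Real.norm_eq_abs]; exact bump_aux2 a ε hε hεa t)
  have hn3 : ‖G * Sop - b • G‖ ≤ ε := by
    rw [← hmulG, ← hsmulG b,
      ← cfc_sub (fun t : ℝ => g t * t) (fun t : ℝ => b * g t) Sop
        ((hgc.mul continuous_id).continuousOn) ((continuous_const.mul hgc).continuousOn)]
    exact norm_cfc_le hε.le (fun t _ => by
      rw [Real.norm_eq_abs, mul_comm (g t) t]; exact bump_aux1 b ε hε t)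
  have hn4 : ‖G * Si - b⁻¹ • G‖ ≤ 2*ε/b^2 := by
    rw [← hinvG, ← hsmulG b⁻¹,
      ← cfc_sub (fun t : ℝ => g t * t⁻¹) (fun t : ℝ => b⁻¹ * g t) Sop
        (hgc.continuousOn.mul hinv_cont) ((continuous_const.mul hgc).continuousOn)]
    exact norm_cfc_le (by positivity) (fun t _ => by
      rw [Real.norm_eq_abs, mul_comm (g t) t⁻¹]; exact bump_aux2 b ε hε hεb t)
  -- choose near-attaining vectors
  obtain ⟨w, hw1, hw2⟩ := F.exists_lt_apply_of_lt_opNorm (r := 1 - ε) (by linarith)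
  obtain ⟨u, hu1, hu2⟩ := G.exists_lt_apply_of_lt_opNorm (r := 1 - ε) (by linarith)
  have hFw1 : ‖F w‖ ≤ 1 := by
    calc ‖F w‖ ≤ ‖F‖ * ‖w‖ := F.le_opNorm w
      _ ≤ 1 := by nlinarith [norm_nonneg w, norm_nonneg F]
  have hGu1 : ‖G u‖ ≤ 1 := by
    calc ‖G u‖ ≤ ‖G‖ * ‖u‖ := G.le_opNorm u
      _ ≤ 1 := by nlinarith [norm_nonneg u, norm_nonneg G]
  set A := (innerSL ℂ (G u)).smulRight w with hA_def
  have hAn : ‖A‖ ≤ 1 := by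
    rw [hA_def, norm_smulRight_apply, innerSL_apply_norm]
    nlinarith [norm_nonneg (G u), norm_nonneg w]
  set X := F * A * G with hX_def
  have hXn : ‖X‖ ≤ 1 := by
    calc ‖X‖ ≤ ‖F * A‖ * ‖G‖ := norm_mul_le _ _
      _ ≤ (‖F‖ * ‖A‖) * ‖G‖ :=
        mul_le_mul_of_nonneg_right (norm_mul_le F A) (norm_nonneg G)
      _ ≤ 1 := by nlinarith [norm_nonneg F, norm_nonneg A, norm_nonneg G,
        mul_nonneg (norm_nonneg F) (norm_nonneg A)]
  have hXu : X u = ((‖G u‖ : ℂ)^2) • F w := by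
    rw [hX_def, hA_def]
    simp only [ContinuousLinearMap.mul_apply, smulRight_apply, innerSL_apply_apply, map_smul]
    rw [inner_self_eq_norm_sq_to_K]
    norm_cast
  have hXge : (1-ε)^3 ≤ ‖X‖ := by
    have h1 : ‖X u‖ = ‖G u‖^2 * ‖F w‖ := by
      rw [hXu, norm_smul, norm_pow, Complex.norm_real, Real.norm_eq_abs,
        abs_of_nonneg (norm_nonneg _)]
    have h2 : ‖X u‖ ≤ ‖X‖ := by
      calc ‖X u‖ ≤ ‖X‖ * ‖u‖ := X.le_opNorm u
        _ ≤ ‖X‖ * 1 := by nlinarith [norm_nonneg X, norm_nonneg (X u), X.le_opNorm u]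
        _ = ‖X‖ := mul_one _
    have hε' : (0:ℝ) ≤ 1 - ε := by linarith
    calc (1-ε)^3 = (1-ε)^2 * (1-ε) := by ring
      _ ≤ ‖G u‖^2 * ‖F w‖ := by
          apply mul_le_mul (by nlinarith) hw2.le hε' (by positivity)
      _ = ‖X u‖ := h1.symm
      _ ≤ ‖X‖ := h2
  -- decomposition
  have hdecomp : Sop * X * Si + Si * X * Sop + k • X
      = (a * b⁻¹ + a⁻¹ * b + k) • X +
        ((Sop*F - a • F) * (A * (G*Si)) + a • (F * (A * (G*Si - b⁻¹ • G))) +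
         ((Si*F - a⁻¹ • F) * (A * (G*Sop)) + a⁻¹ • (F * (A * (G*Sop - b • G))))) := by
    rw [hX_def]
    simp only [mul_sub, sub_mul, smul_mul_assoc, mul_smul_comm, smul_smul, smul_sub,
      smul_add, add_smul, mul_assoc]
    abel
  -- norm chase
  have mulb : ∀ (x y : H →L[ℂ] H) (cx cy : ℝ), ‖x‖ ≤ cx → ‖y‖ ≤ cy → ‖x*y‖ ≤ cx*cy :=
    fun x y cx cy hx hy => (norm_mul_le x y).trans
      (mul_le_mul hx hy (norm_nonneg y) ((norm_nonneg x).trans hx))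
  have hgsi : ‖G*Si‖ ≤ ‖Si‖ := by simpa using mulb G Si 1 ‖Si‖ hGn le_rfl
  have hgsop : ‖G*Sop‖ ≤ ‖Sop‖ := by simpa using mulb G Sop 1 ‖Sop‖ hGn le_rfl
  have t1 : ‖(Sop*F - a • F) * (A * (G*Si))‖ ≤ ε * ‖Si‖ :=
    mulb _ _ _ _ hn1 (by simpa using mulb A (G*Si) 1 ‖Si‖ hAn hgsi)
  have t2 : ‖a • (F * (A * (G*Si - b⁻¹ • G)))‖ ≤ |a| * (2*ε/b^2) := by
    rw [norm_smul, Real.norm_eq_abs]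
    have i2 : ‖A * (G*Si - b⁻¹ • G)‖ ≤ 2*ε/b^2 := by
      simpa using mulb A (G*Si - b⁻¹ • G) 1 (2*ε/b^2) hAn hn4
    have i2' : ‖F * (A * (G*Si - b⁻¹ • G))‖ ≤ 2*ε/b^2 := by
      simpa using mulb F (A * (G*Si - b⁻¹ • G)) 1 (2*ε/b^2) hFn i2
    exact mul_le_mul_of_nonneg_left i2' (abs_nonneg a)
  have t3 : ‖(Si*F - a⁻¹ • F) * (A * (G*Sop))‖ ≤ (2*ε/a^2) * ‖Sop‖ :=
    mulb _ _ _ _ hn2 (by simpa using mulb A (G*Sop) 1 ‖Sop‖ hAn hgsop)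
  have t4 : ‖a⁻¹ • (F * (A * (G*Sop - b • G)))‖ ≤ |a|⁻¹ * ε := by
    rw [norm_smul, Real.norm_eq_abs, abs_inv]
    have i4 : ‖A * (G*Sop - b • G)‖ ≤ ε := by
      simpa using mulb A (G*Sop - b • G) 1 ε hAn hn3
    have i4' : ‖F * (A * (G*Sop - b • G))‖ ≤ ε := by
      simpa using mulb F (A * (G*Sop - b • G)) 1 ε hFn i4
    exact mul_le_mul_of_nonneg_left i4' (by positivity)
  have hfin := h X
  rw [hdecomp] at hfin
  have hnorm : ‖(a * b⁻¹ + a⁻¹ * b + k) • X +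
        ((Sop*F - a • F) * (A * (G*Si)) + a • (F * (A * (G*Si - b⁻¹ • G))) +
         ((Si*F - a⁻¹ • F) * (A * (G*Sop)) + a⁻¹ • (F * (A * (G*Sop - b • G)))))‖
      ≤ |a * b⁻¹ + a⁻¹ * b + k| * ‖X‖ +
        (ε * ‖Si‖ + |a| * (2*ε/b^2) + ((2*ε/a^2) * ‖Sop‖ + |a|⁻¹ * ε)) := by
    calc ‖_ + _‖ ≤ ‖(a * b⁻¹ + a⁻¹ * b + k) • X‖ +
          ‖(Sop*F - a • F) * (A * (G*Si)) + a • (F * (A * (G*Si - b⁻¹ • G))) +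
           ((Si*F - a⁻¹ • F) * (A * (G*Sop)) + a⁻¹ • (F * (A * (G*Sop - b • G))))‖ :=
        norm_add_le _ _
      _ ≤ |a * b⁻¹ + a⁻¹ * b + k| * ‖X‖ +
          (ε * ‖Si‖ + |a| * (2*ε/b^2) + ((2*ε/a^2) * ‖Sop‖ + |a|⁻¹ * ε)) := by
        rw [norm_smul, Real.norm_eq_abs]
        apply add_le_add le_rfl
        calc ‖_ + _‖ ≤ ‖(Sop*F - a • F) * (A * (G*Si)) + a • (F * (A * (G*Si - b⁻¹ • G)))‖ +
              ‖(Si*F - a⁻¹ • F) * (A * (G*Sop)) + a⁻¹ • (F * (A * (G*Sop - b • G)))‖ :=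
            norm_add_le _ _
          _ ≤ _ := add_le_add ((norm_add_le _ _).trans (add_le_add t1 t2))
              ((norm_add_le _ _).trans (add_le_add t3 t4))
  have habs : |a * b⁻¹ + a⁻¹ * b + k| * ‖X‖ ≤ |a * b⁻¹ + a⁻¹ * b + k| :=
    mul_le_of_le_one_right (abs_nonneg _) hXn
  have hXge' : (k+2) * (1-ε)^3 ≤ (k+2) * ‖X‖ :=
    mul_le_mul_of_nonneg_left hXge (by linarith)
  have hCε : ε * ‖Si‖ + |a| * (2*ε/b^2) + ((2*ε/a^2) * ‖Sop‖ + |a|⁻¹ * ε)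
      = (‖Si‖ + |a| * (2/b^2) + (2/a^2) * ‖Sop‖ + |a|⁻¹) * ε := by ring
  linarith

theorem stmt11 (k : ℝ) (hk : 0 ≤ k) (S : (H →L[ℂ] H)ˣ)
    (hS : IsSelfAdjoint (S : H →L[ℂ] H))
    (h : ∀ X : H →L[ℂ] H,
      (k + 2) * ‖X‖ ≤ ‖(S : H →L[ℂ] H) * X * (↑S⁻¹ : H →L[ℂ] H) +
        (↑S⁻¹ : H →L[ℂ] H) * X * (S : H →L[ℂ] H) + k • X‖) :
    ∀ l m : ℂ, l ∈ spectrum ℂ (S : H →L[ℂ] H) → m ∈ spectrum ℂ (S : H →L[ℂ] H) →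
      k + 2 ≤ ‖l / m + m / l + k‖ := by
  intro l m hl hm
  have hla := hS.mem_spectrum_eq_re hl
  have hmb := hS.mem_spectrum_eq_re hm
  set a : ℝ := l.re with ha_def
  set b : ℝ := m.re with hb_def
  have haS : a ∈ spectrum ℝ (S : H →L[ℂ] H) := by
    rw [← spectrum.algebraMap_mem_iff ℂ]
    simpa [← hla] using hl
  have hbS : b ∈ spectrum ℝ (S : H →L[ℂ] H) := by
    rw [← spectrum.algebraMap_mem_iff ℂ]
    simpa [← hmb] using hm
  have h0 : (0:ℝ) ∉ spectrum ℝ (S : H →L[ℂ] H) := spectrum.zero_notMem ℝ S.isUnit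
  have ha0 : a ≠ 0 := fun hz => h0 (hz ▸ haS)
  have hb0 : b ≠ 0 := fun hz => h0 (hz ▸ hbS)
  have hgoal : ‖l / m + m / l + ↑k‖ = |a * b⁻¹ + a⁻¹ * b + k| := by
    rw [hla, hmb, show (↑a:ℂ) / ↑b + ↑b / ↑a + ↑k = ((a * b⁻¹ + a⁻¹ * b + k : ℝ):ℂ) by
      push_cast; ring]
    rw [Complex.norm_real, Real.norm_eq_abs]
  rw [hgoal]
  have habs : 0 < |a| := abs_pos.mpr ha0
  have hbabs : 0 < |b| := abs_pos.mpr hb0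
  apply stmt11_limit k _ _ (min (min (|a|/2) (|b|/2)) (1/2))
  · simp only [lt_min_iff]
    exact ⟨⟨by linarith, by linarith⟩, by norm_num⟩
  · intro ε hε
    exact stmt11_core k hk S hS h a b haS hbS h0 ha0 hb0 ε hε.1
      (hε.2.trans ((min_le_left _ _).trans (min_le_left _ _)))
      (hε.2.trans ((min_le_left _ _).trans (min_le_right _ _)))
      (hε.2.trans (min_le_right _ _))
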